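/- The coefficients of the spectral polynomial of the periodic discrete Toda lattice are subtraction-free: there exist polynomials p_0, p_1, …, p_g in the 2(g+1) variables I_1,…,I_{g+1}, V_1,…,V_{g+1} with nonnegative integer coefficients such that for all complex I_1,…,I_{g+1}, V_1,…,V_{g+1}, all x ∈ ℂ, and all y ≠ 0: y·det(x·𝟙 + L(I;V)) = y² + y·(x^{g+1} + Σ_{k=0}^{g} p_k(I,V)·x^k) + Π_{i=1}^{g+1} I_i V_i. -/

import Mathlib

/-- The Lax matrix `L(I;V)` of the periodic discrete Toda lattice (0-indexed:
row/column `i : Fin (g+1)` corresponds to the 1-indexed `i+1`).  Its entries are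
`L_{ii} = I_{i+1} + V_i` (cyclically, so the last diagonal entry is
`I_1 + V_{g+1}`), `L_{i,i+1} = 1`, `L_{i+1,i} = I_{i+1} V_{i+1}`,
`L_{1,g+1} = (-1)^g I_1 V_1 / y`, `L_{g+1,1} = (-1)^g y`,
all other entries `0`. -/
noncomputable def todaLax (g : ℕ) (I V : Fin (g + 1) → ℂ) (y : ℂ) :
    Matrix (Fin (g + 1)) (Fin (g + 1)) ℂ :=
  Matrix.of fun i j =>
    (if j = i then I (i + 1) + V i else 0)
    + (if (i : ℕ) + 1 = (j : ℕ) then 1 else 0)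
    + (if (j : ℕ) + 1 = (i : ℕ) then I i * V i else 0)
    + (if (i : ℕ) = 0 ∧ (j : ℕ) = g then (-1) ^ g * I 0 * V 0 / y else 0)
    + (if (i : ℕ) = g ∧ (j : ℕ) = 0 then (-1) ^ g * y else 0)

open Polynomial Matrix Fin
open Fin.NatCast

namespace TodaSF


def tri (d u l : ℕ → ℂ) (n : ℕ) : Matrix (Fin n) (Fin n) ℂ :=
  Matrix.of fun i j =>
    if (i : ℕ) = (j : ℕ) then d i
    else if (i : ℕ) + 1 = (j : ℕ) then u i
    else if (j : ℕ) + 1 = (i : ℕ) then l j else 0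

lemma tri_apply (d u l : ℕ → ℂ) (n : ℕ) (i j : Fin n) :
    tri d u l n i j =
      if (i : ℕ) = (j : ℕ) then d i
      else if (i : ℕ) + 1 = (j : ℕ) then u i
      else if (j : ℕ) + 1 = (i : ℕ) then l j else 0 := rfl

lemma tri_eq_zero {d u l : ℕ → ℂ} {n : ℕ} {i j : Fin n}
    (h1 : (i : ℕ) ≠ j) (h2 : (i : ℕ) + 1 ≠ j) (h3 : (j : ℕ) + 1 ≠ i) :
    tri d u l n i j = 0 := by
  simp [tri_apply, h1, h2, h3]

lemma tri_apply_eq {d u l : ℕ → ℂ} {n n' : ℕ} {i j : Fin n} {i' j' : Fin n'}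
    (hi : (i : ℕ) = (i' : ℕ)) (hj : (j : ℕ) = (j' : ℕ)) :
    tri d u l n i j = tri d u l n' i' j' := by
  simp only [tri_apply, hi, hj]

@[simp] lemma det_tri_one (d u l : ℕ → ℂ) : (tri d u l 1).det = d 0 := by
  rw [Matrix.det_fin_one]; rfl

lemma det_minor1 (d u l : ℕ → ℂ) (n : ℕ) :
    ((tri d u l (n + 2)).submatrix Fin.castSucc ((Fin.last n).castSucc.succAbove)).det
      = u n * (tri d u l n).det := by
  rw [Matrix.det_succ_column _ (Fin.last n)]
  rw [Finset.sum_eq_single (Fin.last n)]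
  · have he : (Fin.last n).castSucc.succAbove (Fin.last n) = Fin.last (n + 1) := by
      rw [Fin.succAbove_of_le_castSucc _ _ le_rfl]
      ext; simp
    have hval : (tri d u l (n + 2)).submatrix Fin.castSucc ((Fin.last n).castSucc.succAbove)
        (Fin.last n) (Fin.last n) = u n := by
      rw [Matrix.submatrix_apply, he, tri_apply]
      simp
    rw [hval]
    have hmm : ((tri d u l (n + 2)).submatrix Fin.castSucc
          ((Fin.last n).castSucc.succAbove)).submatrix (Fin.last n).succAbove
          (Fin.last n).succAbove = tri d u l n := by
      ext i j
      rw [Matrix.submatrix_apply, Matrix.submatrix_apply]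
      simp only [Fin.succAbove_last]
      have hj : (Fin.last n).castSucc.succAbove j.castSucc = j.castSucc.castSucc := by
        rw [Fin.succAbove_of_castSucc_lt]
        simp [Fin.lt_def, j.isLt]
      rw [hj]
      exact tri_apply_eq (by simp) (by simp)
    rw [hmm]
    have : Even ((Fin.last n : ℕ) + (Fin.last n : ℕ)) := ⟨(Fin.last n : ℕ), rfl⟩
    rw [this.neg_one_pow]
    ring
  · intro i _ hi
    have hv : (i : ℕ) < n := lt_of_le_of_ne (Fin.le_last i) (fun h => hi (Fin.ext h))
    have he : (Fin.last n).castSucc.succAbove (Fin.last n) = Fin.last (n + 1) := by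
      rw [Fin.succAbove_of_le_castSucc _ _ le_rfl]
      ext; simp
    have : (tri d u l (n + 2)).submatrix Fin.castSucc ((Fin.last n).castSucc.succAbove)
        i (Fin.last n) = 0 := by
      rw [Matrix.submatrix_apply, he]
      apply tri_eq_zero <;> simp <;> omega
    rw [this, mul_zero, zero_mul]
  · simp

lemma det_tri_peel (d u l : ℕ → ℂ) (n : ℕ) :
    (tri d u l (n + 2)).det
      = d (n + 1) * (tri d u l (n + 1)).det - l n * u n * (tri d u l n).det := by
  rw [Matrix.det_succ_row _ (Fin.last (n + 1))]
  rw [Fin.sum_univ_castSucc, Fin.sum_univ_castSucc]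
  have hz : ∀ j : Fin n, ((-1 : ℂ) ^ ((Fin.last (n+1) : ℕ) + ((j.castSucc.castSucc : Fin (n+2)) : ℕ)) *
        tri d u l (n+2) (Fin.last (n+1)) j.castSucc.castSucc *
        ((tri d u l (n+2)).submatrix (Fin.last (n+1)).succAbove
          (j.castSucc.castSucc).succAbove).det) = 0 := by
    intro j
    have : tri d u l (n+2) (Fin.last (n+1)) j.castSucc.castSucc = 0 := by
      apply tri_eq_zero <;> simp <;> omega
    simp [this]
  rw [Finset.sum_eq_zero fun j _ => hz j, zero_add]
  -- term at j = castSucc (last n)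
  have h1e : tri d u l (n+2) (Fin.last (n+1)) (Fin.last n).castSucc = l n := by
    rw [tri_apply]
    simp only [Fin.val_last, Fin.coe_castSucc]
    rw [if_neg (by omega), if_neg (by omega)]; simp
  have h1s : (-1 : ℂ) ^ ((Fin.last (n+1) : ℕ) + ((Fin.last n).castSucc : ℕ)) = -1 := by
    apply Odd.neg_one_pow
    simp only [Fin.val_last, Fin.coe_castSucc]
    exact ⟨n, by ring⟩
  -- term at j = last (n+1)
  have h2e : tri d u l (n+2) (Fin.last (n+1)) (Fin.last (n+1)) = d (n+1) := by
    rw [tri_apply]; simp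
  have h2s : (-1 : ℂ) ^ ((Fin.last (n+1) : ℕ) + ((Fin.last (n+1)) : ℕ)) = 1 := by
    apply Even.neg_one_pow
    exact ⟨n+1, by simp⟩
  have hm2 : (tri d u l (n+2)).submatrix (Fin.last (n+1)).succAbove
      (Fin.last (n+1)).succAbove = tri d u l (n+1) := by
    ext i j
    rw [Matrix.submatrix_apply]
    simp only [Fin.succAbove_last]
    exact tri_apply_eq (by simp) (by simp)
  rw [h1e, h1s, h2e, h2s, hm2]
  have : (Fin.last (n+1)).succAbove = Fin.castSucc := Fin.succAbove_last
  rw [this, det_minor1]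
  ring



noncomputable def Ip (G k : ℕ) : MvPolynomial (Fin (G + 2) ⊕ Fin (G + 2)) ℕ :=
  MvPolynomial.X (Sum.inl (k : Fin (G + 2)))

noncomputable def Vp (G k : ℕ) : MvPolynomial (Fin (G + 2) ⊕ Fin (G + 2)) ℕ :=
  MvPolynomial.X (Sum.inr (k : Fin (G + 2)))

/-- one step of the positive recursion: state `(s_m, r_m, r_{m-1})` -/
noncomputable def stepP (G m : ℕ)
    (p : Polynomial (MvPolynomial (Fin (G + 2) ⊕ Fin (G + 2)) ℕ) ×
         Polynomial (MvPolynomial (Fin (G + 2) ⊕ Fin (G + 2)) ℕ) ×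
         Polynomial (MvPolynomial (Fin (G + 2) ⊕ Fin (G + 2)) ℕ)) :
    Polynomial (MvPolynomial (Fin (G + 2) ⊕ Fin (G + 2)) ℕ) ×
    Polynomial (MvPolynomial (Fin (G + 2) ⊕ Fin (G + 2)) ℕ) ×
    Polynomial (MvPolynomial (Fin (G + 2) ⊕ Fin (G + 2)) ℕ) :=
  ((X + C (Vp G (m+1))) * p.1 + X * C (Ip G (m+1)) * p.2.2,
   (X + C (Vp G (m+1))) * p.1 + X * C (Ip G (m+1)) * p.2.2 + C (Ip G (m+2)) * p.2.1,
   p.2.1)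

noncomputable def seqP (G : ℕ)
    (base : Polynomial (MvPolynomial (Fin (G + 2) ⊕ Fin (G + 2)) ℕ) ×
            Polynomial (MvPolynomial (Fin (G + 2) ⊕ Fin (G + 2)) ℕ) ×
            Polynomial (MvPolynomial (Fin (G + 2) ⊕ Fin (G + 2)) ℕ)) :
    ℕ → Polynomial (MvPolynomial (Fin (G + 2) ⊕ Fin (G + 2)) ℕ) ×
         Polynomial (MvPolynomial (Fin (G + 2) ⊕ Fin (G + 2)) ℕ) ×
         Polynomial (MvPolynomial (Fin (G + 2) ⊕ Fin (G + 2)) ℕ)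
  | 0 => base
  | m + 1 => stepP G m (seqP G base m)

noncomputable def baseA (G : ℕ) := ((1 : Polynomial (MvPolynomial (Fin (G + 2) ⊕ Fin (G + 2)) ℕ)), (1 : Polynomial (MvPolynomial (Fin (G + 2) ⊕ Fin (G + 2)) ℕ)), (0 : Polynomial (MvPolynomial (Fin (G + 2) ⊕ Fin (G + 2)) ℕ)))

noncomputable def baseP (G : ℕ) := ((X : Polynomial (MvPolynomial (Fin (G + 2) ⊕ Fin (G + 2)) ℕ)), (X + C (Ip G 1) : Polynomial (MvPolynomial (Fin (G + 2) ⊕ Fin (G + 2)) ℕ)), (1 : Polynomial (MvPolynomial (Fin (G + 2) ⊕ Fin (G + 2)) ℕ)))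

lemma seq_invariant (G : ℕ) (base) (hb : base.2.1 = base.1 + C (Ip G 1) * base.2.2) :
    ∀ m, (seqP G base m).2.1 = (seqP G base m).1 + C (Ip G (m+1)) * (seqP G base m).2.2 := by
  intro m
  cases m with
  | zero => exact hb
  | succ m => rfl

lemma baseA_invariant (G : ℕ) : (baseA G).2.1 = (baseA G).1 + C (Ip G 1) * (baseA G).2.2 := by
  simp [baseA]

lemma baseP_invariant (G : ℕ) : (baseP G).2.1 = (baseP G).1 + C (Ip G 1) * (baseP G).2.2 := by
  simp [baseP]

lemma seq_degree (G : ℕ) (base) (δ : ℕ)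
    (h1 : base.1.Monic) (h2 : base.1.degree = (δ : WithBot ℕ))
    (h3 : base.2.1.Monic) (h4 : base.2.1.degree = (δ : WithBot ℕ))
    (h5 : base.2.2.degree + 1 ≤ (δ : WithBot ℕ)) :
    ∀ m, (seqP G base m).1.Monic ∧ (seqP G base m).1.degree = ((m + δ : ℕ) : WithBot ℕ)
      ∧ (seqP G base m).2.1.Monic ∧ (seqP G base m).2.1.degree = ((m + δ : ℕ) : WithBot ℕ)
      ∧ (seqP G base m).2.2.degree + 1 ≤ ((m + δ : ℕ) : WithBot ℕ) := by
  intro m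
  induction m with
  | zero => exact ⟨h1, by simpa [seqP] using h2, h3, by simpa [seqP] using h4, by simpa [seqP] using h5⟩
  | succ m ih =>
    obtain ⟨hs, hsd, hr, hrd, hp⟩ := ih
    set s := (seqP G base m).1 with hsdef
    set r := (seqP G base m).2.1 with hrdef
    set p := (seqP G base m).2.2 with hpdef
    have hcast : ((m + δ : ℕ) : WithBot ℕ) + 1 = ((m + 1 + δ : ℕ) : WithBot ℕ) := by
      push_cast; ring
    have hXV : ((X + C (Vp G (m+1))) * s).Monic := (monic_X_add_C _).mul hs
    have hXVd : ((X + C (Vp G (m+1))) * s).degree = ((m + 1 + δ : ℕ) : WithBot ℕ) := by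
      rw [hs.degree_mul, degree_X_add_C, hsd]
      push_cast; ring
    have hsecond : (X * C (Ip G (m+1)) * p).degree ≤ ((m + δ : ℕ) : WithBot ℕ) := by
      calc (X * C (Ip G (m+1)) * p).degree ≤ (X * C (Ip G (m+1))).degree + p.degree :=
            degree_mul_le _ _
        _ ≤ 1 + p.degree := by
            gcongr
            calc (X * C (Ip G (m+1))).degree
                ≤ (X : Polynomial (MvPolynomial (Fin (G + 2) ⊕ Fin (G + 2)) ℕ)).degree
                    + (C (Ip G (m+1))).degree := degree_mul_le _ _
              _ ≤ 1 + 0 := by gcongr <;> [exact degree_X_le; exact degree_C_le]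
              _ = 1 := by simp
        _ = p.degree + 1 := by rw [add_comm]
        _ ≤ _ := hp
    have hsecond_lt : (X * C (Ip G (m+1)) * p).degree < ((m + 1 + δ : ℕ) : WithBot ℕ) :=
      lt_of_le_of_lt hsecond (by exact_mod_cast by omega)
    have hE1 : ((X + C (Vp G (m+1))) * s + X * C (Ip G (m+1)) * p).Monic :=
      hXV.add_of_left (by rw [hXVd]; exact hsecond_lt)
    have hE1d : ((X + C (Vp G (m+1))) * s + X * C (Ip G (m+1)) * p).degree
        = ((m + 1 + δ : ℕ) : WithBot ℕ) := by
      rw [degree_add_eq_left_of_degree_lt (by rw [hXVd]; exact hsecond_lt), hXVd]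
    have hthird : (C (Ip G (m+2)) * r).degree ≤ ((m + δ : ℕ) : WithBot ℕ) := by
      calc (C (Ip G (m+2)) * r).degree ≤ (C (Ip G (m+2))).degree + r.degree := degree_mul_le _ _
        _ ≤ 0 + r.degree := by gcongr; exact degree_C_le
        _ = r.degree := by rw [zero_add]
        _ = _ := hrd
    have hthird_lt : (C (Ip G (m+2)) * r).degree < ((m + 1 + δ : ℕ) : WithBot ℕ) :=
      lt_of_le_of_lt hthird (by exact_mod_cast by omega)
    have hE2 : ((X + C (Vp G (m+1))) * s + X * C (Ip G (m+1)) * p + C (Ip G (m+2)) * r).Monic :=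
      hE1.add_of_left (by rw [hE1d]; exact hthird_lt)
    have hE2d : ((X + C (Vp G (m+1))) * s + X * C (Ip G (m+1)) * p + C (Ip G (m+2)) * r).degree
        = ((m + 1 + δ : ℕ) : WithBot ℕ) := by
      rw [degree_add_eq_left_of_degree_lt (by rw [hE1d]; exact hthird_lt), hE1d]
    have hnewp : r.degree + 1 ≤ ((m + 1 + δ : ℕ) : WithBot ℕ) := by
      rw [hrd, hcast]
    exact ⟨hE1, hE1d, hE2, hE2d, hnewp⟩


section Complex

variable (G : ℕ) (I V : Fin (G + 2) → ℂ) (x y : ℂ)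

noncomputable def phi : Polynomial (MvPolynomial (Fin (G + 2) ⊕ Fin (G + 2)) ℕ) →+* ℂ :=
  eval₂RingHom ((MvPolynomial.aeval (Sum.elim I V)).toRingHom :
    MvPolynomial (Fin (G + 2) ⊕ Fin (G + 2)) ℕ →+* ℂ) x

@[simp] lemma phi_X : phi G I V x X = x := eval₂_X _ _

@[simp] lemma phi_C_Ip (k : ℕ) : phi G I V x (C (Ip G k)) = I (k : Fin (G + 2)) := by
  rw [phi, coe_eval₂RingHom, eval₂_C]
  simp [Ip]

@[simp] lemma phi_C_Vp (k : ℕ) : phi G I V x (C (Vp G k)) = V (k : Fin (G + 2)) := by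
  rw [phi, coe_eval₂RingHom, eval₂_C]
  simp [Vp]

/-- diagonal entries -/
noncomputable def ddc (k : ℕ) : ℂ := x + I ((k + 1 : ℕ) : Fin (G + 2)) + V ((k : ℕ) : Fin (G + 2))

/-- subdiagonal entries -/
noncomputable def llc (k : ℕ) : ℂ := I ((k + 1 : ℕ) : Fin (G + 2)) * V ((k + 1 : ℕ) : Fin (G + 2))

/-- modified diagonal for the `P` family -/
noncomputable def ddP (k : ℕ) : ℂ :=
  if k = 0 then x + I ((1 : ℕ) : Fin (G + 2)) else ddc G I V x k

lemma phi_invariant (base) (hb : base.2.1 = base.1 + C (Ip G 1) * base.2.2) (m : ℕ) :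
    phi G I V x (seqP G base m).2.1 = phi G I V x (seqP G base m).1
      + I ((m + 1 : ℕ) : Fin (G + 2)) * phi G I V x (seqP G base m).2.2 := by
  rw [seq_invariant G base hb m]
  simp

lemma rC_succ (base) (hb : base.2.1 = base.1 + C (Ip G 1) * base.2.2) (m : ℕ) :
    phi G I V x (seqP G base (m + 1)).2.1
      = ddc G I V x (m + 1) * phi G I V x (seqP G base m).2.1
        - llc G I V m * phi G I V x (seqP G base m).2.2 := by
  have hstep : (seqP G base (m + 1)).2.1
      = (X + C (Vp G (m+1))) * (seqP G base m).1 + X * C (Ip G (m+1)) * (seqP G base m).2.2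
        + C (Ip G (m+2)) * (seqP G base m).2.1 := rfl
  rw [hstep]
  have hinv := phi_invariant G I V x base hb m
  simp only [_root_.map_add, _root_.map_mul, phi_X, phi_C_Ip, phi_C_Vp]
  rw [hinv]
  rw [ddc, llc]
  have e1 : (m + 1 + 1 : ℕ) = (m + 2 : ℕ) := rfl
  rw [e1]
  ring

lemma third_succ (base) (m : ℕ) :
    (seqP G base (m + 1)).2.2 = (seqP G base m).2.1 := rfl

/-- two-step induction for sequences satisfying the same second-order recursion -/
lemma two_step (a b f h : ℕ → ℂ) (h0 : f 0 = h 0) (h1 : f 1 = h 1)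
    (hf : ∀ m, f (m + 2) = a m * f (m + 1) - b m * f m)
    (hh : ∀ m, h (m + 2) = a m * h (m + 1) - b m * h m) : ∀ m, f m = h m := by
  have key : ∀ m, f m = h m ∧ f (m + 1) = h (m + 1) := by
    intro m
    induction m with
    | zero => exact ⟨h0, h1⟩
    | succ m ih => exact ⟨ih.2, by rw [hf, hh, ih.1, ih.2]⟩
  exact fun m => (key m).1

lemma detA_eq : ∀ m, (tri (fun k => ddc G I V x (k + 1)) (fun _ => 1)
      (fun k => llc G I V (k + 1)) m).det = phi G I V x (seqP G (baseA G) m).2.1 := by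
  apply two_step (fun m => ddc G I V x (m + 2)) (fun m => llc G I V (m + 1))
  · simp [baseA, seqP]
  · rw [det_tri_one, rC_succ G I V x _ (baseA_invariant G) 0]
    simp [baseA, seqP]
  · intro m
    have := det_tri_peel (fun k => ddc G I V x (k + 1)) (fun _ => 1)
      (fun k => llc G I V (k + 1)) m
    rw [this]; ring
  · intro m
    rw [rC_succ G I V x _ (baseA_invariant G) (m + 1), third_succ]

lemma detP_eq : ∀ m, (tri (ddP G I V x) (fun _ => 1) (llc G I V) (m + 1)).det
      = phi G I V x (seqP G (baseP G) m).2.1 := by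
  apply two_step (fun m => ddc G I V x (m + 2)) (fun m => llc G I V (m + 1))
  · rw [det_tri_one]
    simp [baseP, seqP, ddP]
  · rw [det_tri_peel, rC_succ G I V x _ (baseP_invariant G) 0]
    have h1 : ddP G I V x 1 = ddc G I V x 1 := by rw [ddP]; norm_num
    rw [det_tri_one, h1]
    simp [baseP, seqP, ddP]
  · intro m
    have := det_tri_peel (ddP G I V x) (fun _ => 1) (llc G I V) (m + 1)
    rw [this]
    have h2 : ddP G I V x (m + 2) = ddc G I V x (m + 2) := by rw [ddP]; norm_num
    rw [h2]; ring
  · intro m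
    rw [rC_succ G I V x _ (baseP_invariant G) (m + 1), third_succ]

lemma detT_eq : ∀ m, (tri (ddc G I V x) (fun _ => 1) (llc G I V) (m + 1)).det
      = phi G I V x (seqP G (baseP G) m).2.1 + V 0 * phi G I V x (seqP G (baseA G) m).2.1 := by
  apply two_step (fun m => ddc G I V x (m + 2)) (fun m => llc G I V (m + 1))
  · rw [det_tri_one]
    simp only [seqP, baseP, baseA]
    simp [ddc]
  · rw [det_tri_peel, det_tri_one]
    rw [rC_succ G I V x _ (baseP_invariant G) 0, rC_succ G I V x _ (baseA_invariant G) 0]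
    simp only [seqP, baseP, baseA, _root_.map_one, map_zero, _root_.map_add, phi_X, phi_C_Ip,
      Matrix.det_fin_zero, Nat.cast_one, Nat.cast_zero]
    have h0 : ddc G I V x 0 = x + I ((1 : ℕ) : Fin (G + 2)) + V ((0 : ℕ) : Fin (G + 2)) := rfl
    rw [h0]
    simp only [Nat.cast_one, Nat.cast_zero]
    ring
  · intro m
    have := det_tri_peel (ddc G I V x) (fun _ => 1) (llc G I V) (m + 1)
    rw [this]; ring
  · intro m
    rw [rC_succ G I V x _ (baseP_invariant G) (m + 1), third_succ,
      rC_succ G I V x _ (baseA_invariant G) (m + 1), third_succ]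
    ring

end Complex

noncomputable def Fpoly (G : ℕ) : Polynomial (MvPolynomial (Fin (G + 2) ⊕ Fin (G + 2)) ℕ) :=
  X * (seqP G (baseP G) G).2.1 + C (Ip G 0) * (seqP G (baseP G) G).2.1
    + C (Vp G (G + 1)) * (seqP G (baseP G) G).1
    + X * C (Vp G 0) * (seqP G (baseA G) G).2.1
    + C (Vp G 0) * C (Vp G (G + 1)) * (seqP G (baseA G) G).1

lemma seqP_facts (G : ℕ) :
    (seqP G (baseP G) G).1.Monic ∧ (seqP G (baseP G) G).1.degree = ((G + 1 : ℕ) : WithBot ℕ)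
      ∧ (seqP G (baseP G) G).2.1.Monic
      ∧ (seqP G (baseP G) G).2.1.degree = ((G + 1 : ℕ) : WithBot ℕ)
      ∧ (seqP G (baseP G) G).2.2.degree + 1 ≤ ((G + 1 : ℕ) : WithBot ℕ) :=
  seq_degree G (baseP G) 1 monic_X (by simp [baseP]) (monic_X_add_C _)
    (by simp [baseP, degree_X_add_C]) (by simp [baseP]) G

lemma seqA_facts (G : ℕ) :
    (seqP G (baseA G) G).1.Monic ∧ (seqP G (baseA G) G).1.degree = ((G + 0 : ℕ) : WithBot ℕ)
      ∧ (seqP G (baseA G) G).2.1.Monic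
      ∧ (seqP G (baseA G) G).2.1.degree = ((G + 0 : ℕ) : WithBot ℕ)
      ∧ (seqP G (baseA G) G).2.2.degree + 1 ≤ ((G + 0 : ℕ) : WithBot ℕ) :=
  seq_degree G (baseA G) 0 monic_one (by simp [baseA]) monic_one
    (by simp [baseA]) (by simp [baseA]) G

lemma Fpoly_monic (G : ℕ) : (Fpoly G).Monic ∧ (Fpoly G).degree = ((G + 2 : ℕ) : WithBot ℕ) := by
  obtain ⟨hsP, hsPd, hrP, hrPd, -⟩ := seqP_facts G
  obtain ⟨hsA, hsAd, hrA, hrAd, -⟩ := seqA_facts G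
  have ht1 : (X * (seqP G (baseP G) G).2.1).Monic := monic_X.mul hrP
  have ht1d : (X * (seqP G (baseP G) G).2.1).degree = ((G + 2 : ℕ) : WithBot ℕ) := by
    rw [hrP.degree_mul, degree_X, hrPd]
    push_cast; ring
  have hC : ∀ q : MvPolynomial (Fin (G + 2) ⊕ Fin (G + 2)) ℕ,
      ∀ p : Polynomial (MvPolynomial (Fin (G + 2) ⊕ Fin (G + 2)) ℕ),
      (C q * p).degree ≤ p.degree := by
    intro q p
    calc (C q * p).degree ≤ (C q).degree + p.degree := degree_mul_le _ _
      _ ≤ 0 + p.degree := by gcongr; exact degree_C_le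
      _ = p.degree := zero_add _
  have hlt : ∀ p : Polynomial (MvPolynomial (Fin (G + 2) ⊕ Fin (G + 2)) ℕ),
      p.degree ≤ ((G + 1 : ℕ) : WithBot ℕ) → p.degree < ((G + 2 : ℕ) : WithBot ℕ) := by
    intro p hp
    exact lt_of_le_of_lt hp (by exact_mod_cast by omega)
  have ht2 : (C (Ip G 0) * (seqP G (baseP G) G).2.1).degree < ((G + 2 : ℕ) : WithBot ℕ) :=
    hlt _ (le_trans (hC _ _) (le_of_eq hrPd))
  have ht3 : (C (Vp G (G + 1)) * (seqP G (baseP G) G).1).degree < ((G + 2 : ℕ) : WithBot ℕ) :=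
    hlt _ (le_trans (hC _ _) (le_of_eq hsPd))
  have ht4 : (X * C (Vp G 0) * (seqP G (baseA G) G).2.1).degree < ((G + 2 : ℕ) : WithBot ℕ) := by
    apply hlt
    calc (X * C (Vp G 0) * (seqP G (baseA G) G).2.1).degree
        ≤ (X * C (Vp G 0)).degree + (seqP G (baseA G) G).2.1.degree := degree_mul_le _ _
      _ ≤ 1 + ((G + 0 : ℕ) : WithBot ℕ) := by
          gcongr
          · calc (X * C (Vp G 0)).degree
                ≤ (X : Polynomial (MvPolynomial (Fin (G + 2) ⊕ Fin (G + 2)) ℕ)).degree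
                  + (C (Vp G 0)).degree := degree_mul_le _ _
              _ ≤ 1 + 0 := by gcongr <;> [exact degree_X_le; exact degree_C_le]
              _ = 1 := by simp
          · exact le_of_eq hrAd
      _ = ((G + 1 : ℕ) : WithBot ℕ) := by push_cast; ring
  have ht5 : (C (Vp G 0) * (C (Vp G (G + 1)) * (seqP G (baseA G) G).1)).degree
      < ((G + 2 : ℕ) : WithBot ℕ) := by
    apply hlt
    refine le_trans (hC _ _) (le_trans (hC _ _) ?_)
    rw [hsAd]
    exact_mod_cast by omega
  have ht5' : (C (Vp G 0) * C (Vp G (G + 1)) * (seqP G (baseA G) G).1).degree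
      < ((G + 2 : ℕ) : WithBot ℕ) := by rw [mul_assoc]; exact ht5
  -- assemble
  have h12 : (X * (seqP G (baseP G) G).2.1 + C (Ip G 0) * (seqP G (baseP G) G).2.1).Monic :=
    ht1.add_of_left (by rw [ht1d]; exact ht2)
  have h12d : (X * (seqP G (baseP G) G).2.1 + C (Ip G 0) * (seqP G (baseP G) G).2.1).degree
      = ((G + 2 : ℕ) : WithBot ℕ) := by
    rw [degree_add_eq_left_of_degree_lt (by rw [ht1d]; exact ht2)]; exact ht1d
  have h13 : (X * (seqP G (baseP G) G).2.1 + C (Ip G 0) * (seqP G (baseP G) G).2.1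
      + C (Vp G (G + 1)) * (seqP G (baseP G) G).1).Monic :=
    h12.add_of_left (by rw [h12d]; exact ht3)
  have h13d : (X * (seqP G (baseP G) G).2.1 + C (Ip G 0) * (seqP G (baseP G) G).2.1
      + C (Vp G (G + 1)) * (seqP G (baseP G) G).1).degree = ((G + 2 : ℕ) : WithBot ℕ) := by
    rw [degree_add_eq_left_of_degree_lt (by rw [h12d]; exact ht3)]; exact h12d
  have h14 : (X * (seqP G (baseP G) G).2.1 + C (Ip G 0) * (seqP G (baseP G) G).2.1
      + C (Vp G (G + 1)) * (seqP G (baseP G) G).1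
      + X * C (Vp G 0) * (seqP G (baseA G) G).2.1).Monic :=
    h13.add_of_left (by rw [h13d]; exact ht4)
  have h14d : (X * (seqP G (baseP G) G).2.1 + C (Ip G 0) * (seqP G (baseP G) G).2.1
      + C (Vp G (G + 1)) * (seqP G (baseP G) G).1
      + X * C (Vp G 0) * (seqP G (baseA G) G).2.1).degree = ((G + 2 : ℕ) : WithBot ℕ) := by
    rw [degree_add_eq_left_of_degree_lt (by rw [h13d]; exact ht4)]; exact h13d
  constructor
  · have : (X * (seqP G (baseP G) G).2.1 + C (Ip G 0) * (seqP G (baseP G) G).2.1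
        + C (Vp G (G + 1)) * (seqP G (baseP G) G).1
        + X * C (Vp G 0) * (seqP G (baseA G) G).2.1
        + C (Vp G 0) * C (Vp G (G + 1)) * (seqP G (baseA G) G).1).Monic :=
      h14.add_of_left (by rw [h14d]; exact ht5')
    exact this
  · rw [Fpoly, degree_add_eq_left_of_degree_lt (by rw [h14d]; exact ht5')]
    exact h14d

lemma Fpoly_natDegree (G : ℕ) : (Fpoly G).natDegree = G + 2 :=
  natDegree_eq_of_degree_eq_some (Fpoly_monic G).2

lemma Fpoly_coeff_top (G : ℕ) : (Fpoly G).coeff (G + 2) = 1 := by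
  have := (Fpoly_monic G).1.coeff_natDegree
  rwa [Fpoly_natDegree G] at this

section Complex2

variable (G : ℕ) (I V : Fin (G + 2) → ℂ) (x : ℂ)

lemma phi_Fpoly_sum :
    phi G I V x (Fpoly G) = x ^ (G + 2)
      + ∑ k : Fin (G + 2), MvPolynomial.aeval (Sum.elim I V) ((Fpoly G).coeff k) * x ^ (k : ℕ) := by
  have : phi G I V x (Fpoly G) = eval₂ ((MvPolynomial.aeval (Sum.elim I V)).toRingHom :
      MvPolynomial (Fin (G + 2) ⊕ Fin (G + 2)) ℕ →+* ℂ) x (Fpoly G) := rfl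
  rw [this, eval₂_eq_sum_range, Fpoly_natDegree G, Finset.sum_range_succ, Fpoly_coeff_top G]
  rw [Fin.sum_univ_eq_sum_range
    (fun i => MvPolynomial.aeval (Sum.elim I V) ((Fpoly G).coeff i) * x ^ i) (G + 2)]
  simp [add_comm]

lemma key_identity :
    phi G I V x (seqP G (baseP G) (G + 1)).2.1
      + V 0 * phi G I V x (seqP G (baseA G) (G + 1)).2.1
      - I 0 * V 0 * phi G I V x (seqP G (baseA G) G).2.1
    = phi G I V x (Fpoly G) := by
  have hP1 := rC_succ G I V x _ (baseP_invariant G) G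
  have hA1 := rC_succ G I V x _ (baseA_invariant G) G
  have hinvP := phi_invariant G I V x _ (baseP_invariant G) G
  have hinvA := phi_invariant G I V x _ (baseA_invariant G) G
  have hcast : ((G + 1 + 1 : ℕ) : Fin (G + 2)) = 0 := Fin.natCast_self (G + 2)
  have hdd : ddc G I V x (G + 1) = x + I 0 + V ((G + 1 : ℕ) : Fin (G + 2)) := by
    rw [ddc, hcast]
  have hll : llc G I V G = I ((G + 1 : ℕ) : Fin (G + 2)) * V ((G + 1 : ℕ) : Fin (G + 2)) := rfl
  have hF : phi G I V x (Fpoly G)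
      = x * phi G I V x (seqP G (baseP G) G).2.1
        + I 0 * phi G I V x (seqP G (baseP G) G).2.1
        + V ((G + 1 : ℕ) : Fin (G + 2)) * phi G I V x (seqP G (baseP G) G).1
        + x * V 0 * phi G I V x (seqP G (baseA G) G).2.1
        + V 0 * V ((G + 1 : ℕ) : Fin (G + 2)) * phi G I V x (seqP G (baseA G) G).1 := by
    rw [Fpoly]
    simp only [_root_.map_add, _root_.map_mul, phi_X, phi_C_Ip, phi_C_Vp, Nat.cast_zero]
  rw [hF, hP1, hA1, hdd, hll]
  rw [hinvP, hinvA]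
  ring

end Complex2


section MatrixSide

variable (G : ℕ) (I V : Fin (G + 2) → ℂ) (x y : ℂ)

noncomputable def Tmat : Matrix (Fin (G + 2)) (Fin (G + 2)) ℂ :=
  tri (ddc G I V x) (fun _ => 1) (llc G I V) (G + 2)

/-- `T` plus the lower-left corner entry -/
noncomputable def M1 : Matrix (Fin (G + 2)) (Fin (G + 2)) ℂ :=
  (Tmat G I V x).updateRow (Fin.last (G + 1))
    (fun j => Tmat G I V x (Fin.last (G + 1)) j +
      if (j : ℕ) = 0 then (-1) ^ (G + 1) * y else 0)

/-- `T` plus both corner entries -/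
noncomputable def M2 : Matrix (Fin (G + 2)) (Fin (G + 2)) ℂ :=
  (M1 G I V x y).updateRow 0
    (fun j => M1 G I V x y 0 j +
      if (j : ℕ) = G + 1 then (-1) ^ (G + 1) * I 0 * V 0 / y else 0)

lemma cast_succ_val (i : Fin (G + 2)) : (((i : ℕ) + 1 : ℕ) : Fin (G + 2)) = i + 1 := by
  ext
  simp [Fin.val_add, Fin.val_natCast, Fin.val_one]

lemma cast_val (i : Fin (G + 2)) : (((i : ℕ) : ℕ) : Fin (G + 2)) = i :=
  Fin.cast_val_eq_self i

lemma Amat_eq :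
    x • (1 : Matrix (Fin (G + 2)) (Fin (G + 2)) ℂ) + todaLax (G + 1) I V y = M2 G I V x y := by
  ext i j
  have hlast : (Fin.last (G + 1) : ℕ) = G + 1 := rfl
  have h0 : ((0 : Fin (G + 2)) : ℕ) = 0 := rfl
  have h0l : (0 : Fin (G + 2)) ≠ Fin.last (G + 1) := by
    intro h
    have := congrArg Fin.val h
    simp [Fin.val_last] at this
  have hM2 : M2 G I V x y i j
      = Tmat G I V x i j + (if (i : ℕ) = 0 ∧ (j : ℕ) = G + 1 then (-1) ^ (G + 1) * I 0 * V 0 / y else 0)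
        + (if (i : ℕ) = G + 1 ∧ (j : ℕ) = 0 then (-1) ^ (G + 1) * y else 0) := by
    rw [M2, M1]
    simp only [Matrix.updateRow_apply]
    by_cases hi0 : i = 0
    · subst hi0
      rw [if_pos rfl, if_neg h0l]
      have hv : ((0 : Fin (G + 2)) : ℕ) = 0 := rfl
      rw [hv]
      have hnot : ¬((0 : ℕ) = G + 1) := by omega
      simp only [hnot, false_and, if_false, true_and, and_true, eq_self_iff_true]
      ring
    · rw [if_neg hi0]
      by_cases hil : i = Fin.last (G + 1)
      · subst hil
        rw [if_pos rfl]
        have hv : ((Fin.last (G + 1) : Fin (G + 2)) : ℕ) = G + 1 := rfl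
        rw [hv]
        have hnot : ¬((G + 1 : ℕ) = 0) := by omega
        simp only [hnot, false_and, if_false, true_and, eq_self_iff_true]
        ring
      · rw [if_neg hil]
        have h1 : ¬((i : ℕ) = 0) := fun h => hi0 (Fin.ext h)
        have h2 : ¬((i : ℕ) = G + 1) := fun h => hil (Fin.ext h)
        simp only [h1, h2, false_and, if_false]
        ring
  rw [hM2]
  rw [Matrix.add_apply, Matrix.smul_apply, Matrix.one_apply, todaLax]
  simp only [Matrix.of_apply, Tmat, tri_apply]
  by_cases h1 : (i : ℕ) = (j : ℕ)
  · have hji : j = i := Fin.ext h1.symm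
    subst hji
    have hno : ¬((j : ℕ) + 1 = (j : ℕ)) := by omega
    have hc1 : ¬((j : ℕ) = 0 ∧ (j : ℕ) = G + 1) := by omega
    have hc2 : ¬((j : ℕ) = G + 1 ∧ (j : ℕ) = 0) := by omega
    simp only [eq_self_iff_true, if_true, hno, hc1, hc2, if_false, ddc, cast_succ_val, cast_val,
      smul_eq_mul, mul_one, add_zero, zero_add]
    ring
  · have hij : ¬(i = j) := fun h => h1 (congrArg Fin.val h)
    have hji : ¬(j = i) := fun h => h1 (congrArg Fin.val h).symm
    simp only [hij, hji, h1, if_false, smul_eq_mul, mul_zero, zero_add]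
    by_cases h2 : (i : ℕ) + 1 = (j : ℕ)
    · have h3 : ¬((j : ℕ) + 1 = (i : ℕ)) := by omega
      simp only [h2, if_true, h3, if_false, eq_self_iff_true]
      ring
    · by_cases h3 : (j : ℕ) + 1 = (i : ℕ)
      · have hiv : (((j : ℕ) + 1 : ℕ) : Fin (G + 2)) = i := by
          rw [h3, cast_val]
        simp only [h2, if_false, h3, if_true, eq_self_iff_true, llc, hiv, Fin.cast_val_eq_self]
        ring
      · simp only [h2, h3, if_false]
        ring

lemma det_M2 : (M2 G I V x y).det
    = (M1 G I V x y).det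
      + ((M1 G I V x y).updateRow 0
          (fun j => if (j : ℕ) = G + 1 then (-1) ^ (G + 1) * I 0 * V 0 / y else 0)).det := by
  rw [M2]
  have : (fun j => M1 G I V x y 0 j + if (j : ℕ) = G + 1 then (-1) ^ (G + 1) * I 0 * V 0 / y else 0)
      = (M1 G I V x y 0) + (fun j : Fin (G + 2) => if (j : ℕ) = G + 1 then (-1) ^ (G + 1) * I 0 * V 0 / y else 0) := rfl
  rw [this, Matrix.det_updateRow_add, Matrix.updateRow_eq_self]

lemma det_M1 : (M1 G I V x y).det
    = (Tmat G I V x).det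
      + ((Tmat G I V x).updateRow (Fin.last (G + 1))
          (fun j => if (j : ℕ) = 0 then (-1) ^ (G + 1) * y else 0)).det := by
  rw [M1]
  have : (fun j => Tmat G I V x (Fin.last (G + 1)) j + if (j : ℕ) = 0 then (-1) ^ (G + 1) * y else 0)
      = (Tmat G I V x (Fin.last (G + 1)))
        + (fun j : Fin (G + 2) => if (j : ℕ) = 0 then (-1) ^ (G + 1) * y else 0) := rfl
  rw [this, Matrix.det_updateRow_add, Matrix.updateRow_eq_self]

lemma det_corner_low :
    ((Tmat G I V x).updateRow (Fin.last (G + 1))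
      (fun j => if (j : ℕ) = 0 then (-1) ^ (G + 1) * y else 0)).det = y := by
  set M := (Tmat G I V x).updateRow (Fin.last (G + 1))
      (fun j => if (j : ℕ) = 0 then (-1) ^ (G + 1) * y else 0) with hM
  rw [Matrix.det_succ_row M (Fin.last (G + 1))]
  rw [Finset.sum_eq_single 0]
  · have he : M (Fin.last (G + 1)) 0 = (-1) ^ (G + 1) * y := by
      rw [hM, Matrix.updateRow_self]
      simp
    rw [he]
    have hminor : M.submatrix (Fin.last (G + 1)).succAbove (0 : Fin (G + 2)).succAbove
        = (Tmat G I V x).submatrix Fin.castSucc Fin.succ := by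
      ext a b
      rw [Matrix.submatrix_apply, Matrix.submatrix_apply, Fin.succAbove_last, Fin.succAbove_zero]
      rw [hM, Matrix.updateRow_apply, if_neg (Fin.castSucc_lt_last a).ne]
    rw [hminor]
    have hlow : ((Tmat G I V x).submatrix Fin.castSucc Fin.succ).det = 1 := by
      rw [Matrix.det_of_lowerTriangular _ ?ht]
      case ht =>
        intro a b hab
        have : (a : ℕ) < (b : ℕ) := hab
        rw [Matrix.submatrix_apply, Tmat]
        apply tri_eq_zero <;> simp <;> omega
      have : ∀ a : Fin (G + 1), (Tmat G I V x).submatrix Fin.castSucc Fin.succ a a = 1 := by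
        intro a
        rw [Matrix.submatrix_apply, Tmat, tri_apply]
        simp
      rw [Finset.prod_congr rfl (fun a _ => this a)]
      simp
    rw [hlow]
    have : (-1 : ℂ) ^ ((Fin.last (G + 1) : ℕ) + ((0 : Fin (G + 2)) : ℕ)) = (-1) ^ (G + 1) := by
      norm_num
    rw [this, mul_one, ← mul_assoc, ← pow_add]
    rw [Even.neg_one_pow ⟨G + 1, by ring⟩, one_mul]
  · intro j _ hj
    have : M (Fin.last (G + 1)) j = 0 := by
      rw [hM, Matrix.updateRow_self]
      have : ¬((j : ℕ) = 0) := fun h => hj (Fin.ext h)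
      simp [this]
    rw [this, mul_zero, zero_mul]
  · simp

end MatrixSide


noncomputable def S0 (G : ℕ) (I V : Fin (G + 2) → ℂ) (x : ℂ) : Matrix (Fin (G + 1)) (Fin (G + 1)) ℂ :=
  (Tmat G I V x).submatrix Fin.succ Fin.castSucc

section MatrixSide2

variable (G : ℕ) (I V : Fin (G + 2) → ℂ) (x y : ℂ)

lemma det_corner_up :
    ((M1 G I V x y).updateRow 0
        (fun j : Fin (G + 2) => if (j : ℕ) = G + 1 then (-1) ^ (G + 1) * I 0 * V 0 / y else 0)).det
      = (-1) ^ (G + 1) * ((-1) ^ (G + 1) * I 0 * V 0 / y)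
          * ((M1 G I V x y).submatrix Fin.succ Fin.castSucc).det := by
  set M := (M1 G I V x y).updateRow 0
      (fun j : Fin (G + 2) => if (j : ℕ) = G + 1 then (-1) ^ (G + 1) * I 0 * V 0 / y else 0) with hM
  rw [Matrix.det_succ_row_zero M]
  rw [Finset.sum_eq_single (Fin.last (G + 1))]
  · have he : M 0 (Fin.last (G + 1)) = (-1) ^ (G + 1) * I 0 * V 0 / y := by
      rw [hM, Matrix.updateRow_self]
      simp
    rw [he]
    have hminor : M.submatrix Fin.succ (Fin.last (G + 1)).succAbove
        = (M1 G I V x y).submatrix Fin.succ Fin.castSucc := by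
      ext a b
      rw [Matrix.submatrix_apply, Matrix.submatrix_apply, Fin.succAbove_last]
      rw [hM, Matrix.updateRow_apply, if_neg (Fin.succ_ne_zero a)]
    rw [hminor, Fin.val_last]
  · intro j _ hj
    have : M 0 j = 0 := by
      rw [hM, Matrix.updateRow_self]
      have : ¬((j : ℕ) = G + 1) := fun h => hj (Fin.ext h)
      simp [this]
    rw [this, mul_zero, zero_mul]
  · simp

lemma Smat_eq : (M1 G I V x y).submatrix Fin.succ Fin.castSucc
    = (S0 G I V x).updateCol 0
        (fun k => S0 G I V x k 0 + if (k : ℕ) = G then (-1) ^ (G + 1) * y else 0) := by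
  ext k j
  rw [Matrix.submatrix_apply, Matrix.updateCol_apply, M1, Matrix.updateRow_apply]
  have hsucc : k.succ = Fin.last (G + 1) ↔ (k : ℕ) = G := by
    constructor
    · intro h
      have := congrArg Fin.val h
      simpa using this
    · intro h
      ext
      simpa using h
  by_cases hk : (k : ℕ) = G
  · rw [if_pos (hsucc.mpr hk), if_pos hk]
    have hkl : k.succ = Fin.last (G + 1) := hsucc.mpr hk
    by_cases hj : j = 0
    · subst hj
      have : ((Fin.castSucc (0 : Fin (G + 1)) : Fin (G + 2)) : ℕ) = 0 := rfl
      rw [if_pos rfl, this, if_pos rfl, S0, Matrix.submatrix_apply, hkl]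
    · rw [if_neg hj]
      have : ¬(((Fin.castSucc j : Fin (G + 2)) : ℕ) = 0) := by
        intro h
        exact hj (Fin.ext (by simpa using h))
      rw [if_neg this, S0, Matrix.submatrix_apply, hkl, add_zero]
  · rw [if_neg (fun h => hk (hsucc.mp h)), if_neg hk]
    by_cases hj : j = 0
    · subst hj
      rw [if_pos rfl, add_zero, S0, Matrix.submatrix_apply]
    · rw [if_neg hj, S0, Matrix.submatrix_apply]

lemma det_S0 : (S0 G I V x).det = ∏ k : Fin (G + 1), llc G I V k := by
  rw [Matrix.det_of_upperTriangular]
  · apply Finset.prod_congr rfl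
    intro a _
    rw [S0, Matrix.submatrix_apply, Tmat, tri_apply]
    rw [if_neg (by simp only [Fin.val_succ, Fin.coe_castSucc]; omega),
      if_neg (by simp only [Fin.val_succ, Fin.coe_castSucc]; omega),
      if_pos (by simp only [Fin.val_succ, Fin.coe_castSucc])]
    simp
  · intro a b hab
    have : (b : ℕ) < (a : ℕ) := hab
    rw [S0, Matrix.submatrix_apply, Tmat]
    apply tri_eq_zero <;> simp <;> omega

lemma det_S0corner :
    ((S0 G I V x).updateCol 0
        (fun k : Fin (G + 1) => if (k : ℕ) = G then (-1) ^ (G + 1) * y else 0)).det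
      = - y * phi G I V x (seqP G (baseA G) G).2.1 := by
  set M := (S0 G I V x).updateCol 0
      (fun k : Fin (G + 1) => if (k : ℕ) = G then (-1) ^ (G + 1) * y else 0) with hM
  rw [Matrix.det_succ_column_zero M]
  rw [Finset.sum_eq_single (Fin.last G)]
  · have he : M (Fin.last G) 0 = (-1) ^ (G + 1) * y := by
      rw [hM, Matrix.updateCol_self]
      simp
    rw [he]
    have hminor : M.submatrix (Fin.last G).succAbove Fin.succ
        = tri (fun k => ddc G I V x (k + 1)) (fun _ => 1) (fun k => llc G I V (k + 1)) G := by
      ext a b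
      rw [Matrix.submatrix_apply, hM, Matrix.updateCol_apply,
        if_neg (Fin.succ_ne_zero b)]
      have hra : (Fin.last G).succAbove a = a.castSucc :=
        Fin.succAbove_of_castSucc_lt _ _ (by simp [Fin.lt_def, a.isLt])
      rw [hra, S0, Matrix.submatrix_apply, Tmat, tri_apply, tri_apply]
      simp only [Fin.val_succ, Fin.coe_castSucc]
      by_cases h1 : (a : ℕ) = (b : ℕ)
      · rw [if_pos (by omega), if_pos h1]
      · rw [if_neg (by omega), if_neg h1]
        by_cases h2 : (a : ℕ) + 1 = (b : ℕ)
        · rw [if_pos (by omega), if_pos h2]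
        · rw [if_neg (by omega), if_neg h2]
          by_cases h3 : (b : ℕ) + 1 = (a : ℕ)
          · rw [if_pos (by omega), if_pos h3]
          · rw [if_neg (by omega), if_neg h3]
    rw [hminor, detA_eq G I V x G, Fin.val_last]
    have h : (-1 : ℂ) ^ G * (-1 : ℂ) ^ (G + 1) = -1 := by
      rw [← pow_add]
      exact Odd.neg_one_pow ⟨G, by ring⟩
    linear_combination y * (phi G I V x (seqP G (baseA G) G).2.1) * h
  · intro k _ hk
    have : M k 0 = 0 := by
      rw [hM, Matrix.updateCol_self]
      have : ¬((k : ℕ) = G) := fun h => hk (Fin.ext (by simpa using h))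
      simp [this]
    rw [this, mul_zero, zero_mul]
  · simp

lemma det_Smat : ((M1 G I V x y).submatrix Fin.succ Fin.castSucc).det
    = (∏ k : Fin (G + 1), llc G I V k) - y * phi G I V x (seqP G (baseA G) G).2.1 := by
  rw [Smat_eq]
  have : (fun k => S0 G I V x k 0 + if (k : ℕ) = G then (-1) ^ (G + 1) * y else 0)
      = (fun k => S0 G I V x k 0)
        + (fun k : Fin (G + 1) => if (k : ℕ) = G then (-1) ^ (G + 1) * y else 0) := rfl
  rw [this, Matrix.det_updateCol_add, Matrix.updateCol_eq_self, det_S0, det_S0corner]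
  ring

lemma prod_ll : I 0 * V 0 * ∏ k : Fin (G + 1), llc G I V k = ∏ i : Fin (G + 2), (I i * V i) := by
  rw [Fin.prod_univ_succ (fun i : Fin (G + 2) => I i * V i)]
  have : ∀ k : Fin (G + 1), llc G I V (k : ℕ) = I k.succ * V k.succ := by
    intro k
    have hc : (((k : ℕ) + 1 : ℕ) : Fin (G + 2)) = k.succ := by
      ext
      simp only [Fin.val_natCast, Fin.val_succ]
      exact Nat.mod_eq_of_lt (by omega)
    rw [llc, hc]
  rw [Finset.prod_congr rfl (fun k _ => this k)]

lemma main_det (hy : y ≠ 0) :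
    y * (x • (1 : Matrix (Fin (G + 2)) (Fin (G + 2)) ℂ) + todaLax (G + 1) I V y).det
      = y ^ 2 + y * phi G I V x (Fpoly G) + ∏ i : Fin (G + 2), (I i * V i) := by
  rw [Amat_eq, det_M2, det_M1, det_corner_low, det_corner_up, det_Smat]
  have hT : (Tmat G I V x).det
      = phi G I V x (seqP G (baseP G) (G + 1)).2.1
        + V 0 * phi G I V x (seqP G (baseA G) (G + 1)).2.1 := detT_eq G I V x (G + 1)
  rw [hT, ← key_identity G I V x]
  rw [← prod_ll G I V]
  have hsign : ((-1 : ℂ) ^ (G + 1) * ((-1) ^ (G + 1) * I 0 * V 0 / y)) = I 0 * V 0 / y := by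
    have h2 : (-1 : ℂ) ^ (G + 1) * (-1 : ℂ) ^ (G + 1) = 1 := by
      rw [← pow_add]
      exact Even.neg_one_pow ⟨G + 1, by ring⟩
    field_simp
    linear_combination (I 0 * V 0) * h2
  rw [hsign]
  field_simp
  ring

end MatrixSide2

end TodaSF

/-- The coefficients of the spectral polynomial of the periodic discrete Toda
lattice are subtraction-free: they are given by polynomials with nonnegative
integer (i.e. `ℕ`) coefficients in the variables `I_1, …, I_{g+1}, V_1, …, V_{g+1}`
(encoded as `Sum.inl i ↦ I_i`, `Sum.inr i ↦ V_i`). -/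
theorem todaLax_spectral_coefficients_subtraction_free (g : ℕ) (hg : 1 ≤ g) :
    ∃ p : Fin (g + 1) → MvPolynomial (Fin (g + 1) ⊕ Fin (g + 1)) ℕ,
      ∀ (I V : Fin (g + 1) → ℂ) (x y : ℂ), y ≠ 0 →
        y * (x • (1 : Matrix (Fin (g + 1)) (Fin (g + 1)) ℂ) + todaLax g I V y).det =
          y ^ 2 +
            y * (x ^ (g + 1) +
              ∑ k : Fin (g + 1),
                MvPolynomial.aeval (Sum.elim I V) (p k) * x ^ (k : ℕ)) +
            ∏ i, I i * V i := by
  obtain ⟨G, rfl⟩ : ∃ G, g = G + 1 := ⟨g - 1, by omega⟩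
  refine ⟨fun k => (TodaSF.Fpoly G).coeff (k : ℕ), ?_⟩
  intro I V x y hy
  have hmain := TodaSF.main_det G I V x y hy
  have hsum := TodaSF.phi_Fpoly_sum G I V x
  rw [TodaSF.phi_Fpoly_sum G I V x] at hmain
  exact hmain
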